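/- Let k₂, k₃ > 0 and let b, e be real numbers with 0 < b < e. Then the quadratic equation (1 + k₃²)·u² + u + (1 − b/e)·(k₃²·u − k₂²·u − k₂²) = 0 possesses exactly one solution u > 0. -/

import Mathlib

/-- For `k₂, k₃ > 0` and `0 < b < e`, the quadratic equation
`(1 + k₃²)·u² + u + (1 − b/e)·(k₃²·u − k₂²·u − k₂²) = 0` has exactly one solution
`u > 0`. -/
theorem quadratic_unique_positive_solution (k₂ k₃ b e : ℝ)
    (hk₂ : 0 < k₂) (hk₃ : 0 < k₃) (hb : 0 < b) (hbe : b < e) :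
    ∃! u : ℝ, 0 < u ∧
      (1 + k₃ ^ 2) * u ^ 2 + u + (1 - b / e) * (k₃ ^ 2 * u - k₂ ^ 2 * u - k₂ ^ 2) = 0 := by
  have he : 0 < e := hb.trans hbe
  set t := 1 - b / e with ht_def
  have ht : 0 < t := by
    have : b / e < 1 := (div_lt_one he).mpr hbe
    simp only [ht_def]; linarith
  set A := 1 + k₃ ^ 2 with hA_def
  have hA : 0 < A := by positivity
  set B := 1 + t * (k₃ ^ 2 - k₂ ^ 2) with hB_def
  set C := -(t * k₂ ^ 2) with hC_def
  have hC : C < 0 := by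
    have : 0 < t * k₂ ^ 2 := by positivity
    simp only [hC_def]; linarith
  have key : ∀ u : ℝ,
      (1 + k₃ ^ 2) * u ^ 2 + u + (1 - b / e) * (k₃ ^ 2 * u - k₂ ^ 2 * u - k₂ ^ 2)
        = A * u ^ 2 + B * u + C := by
    intro u; simp only [hA_def, hB_def, hC_def, ht_def]; ring
  set D := B ^ 2 - 4 * A * C with hD_def
  have hD : 0 < D := by nlinarith
  have hsD : Real.sqrt D ^ 2 = D := Real.sq_sqrt hD.le
  have hsD' : B < Real.sqrt D := by
    have h1 : |B| < Real.sqrt D := by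
      rw [← Real.sqrt_sq_eq_abs]
      exact Real.sqrt_lt_sqrt (sq_nonneg B) (by nlinarith)
    exact lt_of_le_of_lt (le_abs_self B) h1
  set r := (-B + Real.sqrt D) / (2 * A) with hr_def
  have hrpos : 0 < r := by
    apply div_pos (by linarith) (by linarith)
  have hreq : A * r ^ 2 + B * r + C = 0 := by
    have h2A : (2 * A) ≠ 0 := by positivity
    field_simp [hr_def]
    have h2 : 2 * A * r = -B + Real.sqrt D := by rw [hr_def]; field_simp
    have h4 : 4 * A * (r * (A * r + B) + C) = 0 := by
      linear_combination (2 * A * r + Real.sqrt D + B) * h2 + hsD + hD_def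
    exact (mul_eq_zero.mp h4).resolve_left (by positivity)
  refine ⟨r, ⟨hrpos, by rw [key]; exact hreq⟩, ?_⟩
  intro u ⟨hu, heq⟩
  rw [key] at heq
  have hfac : (u - r) * (A * (u + r) + B) = 0 := by linear_combination heq - hreq
  have huAB : u * (A * u + B) = -C := by linear_combination heq
  have h1 : 0 < A * u + B := by
    by_contra hle
    push_neg at hle
    have : u * (A * u + B) ≤ 0 := mul_nonpos_of_nonneg_of_nonpos hu.le hle
    linarith
  have h2 : 0 < A * (u + r) + B := by nlinarith [mul_pos hA hrpos]
  have := mul_eq_zero.mp hfac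
  rcases this with h | h
  · linarith
  · linarith
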